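/- arXiv:2507.10550 — 3 statements merged into one kernel-verified Lean document; each statement's English description precedes it below -/
import Mathlib

section
/- Let p be a natural number and let c_p, d_p ∈ ℕ with c_p ≥ 1 and c_p + d_p ≤ p. Then for all d, n ∈ ℕ, |1/(3^d * 5^n) - 1/(2^{c_p} * 3^{d_p} * 5^p)| ≥ 1/30^(3*p), where the expression is evaluated in ℚ. -/
theorem stmt_4 (p cp dp : ℕ) (hcp : 1 ≤ cp) (hle : cp + dp ≤ p) (d n : ℕ) :
    |1 / ((3 : ℚ) ^ d * 5 ^ n) - 1 / ((2 : ℚ) ^ cp * 3 ^ dp * 5 ^ p)| ≥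
      1 / 30 ^ (3 * p) := by
  have hp : 1 ≤ p := le_trans hcp (le_trans (Nat.le_add_right _ _) hle)
  have hcpp : cp ≤ p := le_trans (Nat.le_add_right _ _) hle
  have hdpp : dp ≤ p := le_trans (Nat.le_add_left _ _) hle
  have hAden : (0:ℚ) < (3:ℚ)^d * 5^n := by positivity
  have hBden : (0:ℚ) < (2:ℚ)^cp * 3^dp * 5^p := by positivity
  by_cases hbig : (2:ℚ) * 15^p ≤ 3^d * 5^n
  · -- A is very small, B is at least 1/15^p
    have hA : 1 / ((3:ℚ)^d * 5^n) ≤ 1 / (2 * 15^p) :=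
      one_div_le_one_div_of_le (by positivity) hbig
    have hB : 1 / ((15:ℚ)^p) ≤ 1 / ((2:ℚ)^cp * 3^dp * 5^p) := by
      apply one_div_le_one_div_of_le hBden
      calc (2:ℚ)^cp * 3^dp * 5^p ≤ 3^cp * 3^dp * 5^p := by gcongr; norm_num
        _ = 3^(cp+dp) * 5^p := by rw [pow_add]
        _ ≤ 3^p * 5^p := by gcongr <;> norm_num
        _ = 15^p := by rw [← mul_pow]; norm_num
    have hdiff : 1 / (2 * (15:ℚ)^p) ≤
        1 / ((2:ℚ)^cp * 3^dp * 5^p) - 1 / ((3:ℚ)^d * 5^n) := by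
      have : (1:ℚ)/(2*15^p) = 1/15^p - 1/(2*15^p) := by
        field_simp; ring
      rw [this]
      exact sub_le_sub hB hA
    have habs : |1 / ((3 : ℚ) ^ d * 5 ^ n) - 1 / ((2 : ℚ) ^ cp * 3 ^ dp * 5 ^ p)|
        = 1 / ((2:ℚ)^cp * 3^dp * 5^p) - 1 / ((3:ℚ)^d * 5^n) := by
      rw [abs_sub_comm, abs_of_nonneg]
      linarith [one_div_pos.mpr (show (0:ℚ) < 2*15^p by positivity)]
    rw [habs]
    refine le_trans ?_ hdiff
    apply one_div_le_one_div_of_le (by positivity)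
    have h2p : (2:ℚ) ≤ 2^p := by
      calc (2:ℚ) = 2^1 := (pow_one 2).symm
        _ ≤ 2^p := pow_le_pow_right₀ (by norm_num) hp
    calc (2:ℚ) * 15^p ≤ 2^p * 15^p := by gcongr
      _ = 30^p := by rw [← mul_pow]; norm_num
      _ ≤ 30^(3*p) := pow_le_pow_right₀ (by norm_num) (by omega)
  · push_neg at hbig
    -- bound exponents
    have hd3 : d ≤ 3*p := by
      by_contra h
      push_neg at h
      have h1 : (3:ℚ)^(3*p+1) ≤ 3^d := pow_le_pow_right₀ (by norm_num) (by omega)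
      have h2 : (3:ℚ)^d ≤ 3^d * 5^n := by
        nth_rewrite 1 [← mul_one ((3:ℚ)^d)]; gcongr; exact one_le_pow₀ (by norm_num)
      have h3 : (2:ℚ) * 15^p ≤ 3^(3*p+1) := by
        calc (2:ℚ) * 15^p ≤ 3 * 27^p := by gcongr <;> norm_num
          _ = 3^(3*p+1) := by
            rw [show (27:ℚ) = 3^3 by norm_num, ← pow_mul, pow_succ]; ring
      linarith
    have hn3 : n ≤ 2*p := by
      by_contra h
      push_neg at h
      have h1 : (5:ℚ)^(2*p+1) ≤ 5^n := pow_le_pow_right₀ (by norm_num) (by omega)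
      have h2 : (5:ℚ)^n ≤ 3^d * 5^n := by
        nth_rewrite 1 [← one_mul ((5:ℚ)^n)]; gcongr; exact one_le_pow₀ (by norm_num)
      have h3 : (2:ℚ) * 15^p ≤ 5^(2*p+1) := by
        calc (2:ℚ) * 15^p ≤ 5 * 25^p := by gcongr <;> norm_num
          _ = 5^(2*p+1) := by
            rw [show (25:ℚ) = 5^2 by norm_num, ← pow_mul, pow_succ]; ring
      linarith
    obtain ⟨d', hd'⟩ : ∃ d', 3*p = d + d' := ⟨3*p - d, by omega⟩
    obtain ⟨n', hn'⟩ : ∃ n', 3*p = n + n' := ⟨3*p - n, by omega⟩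
    obtain ⟨cp', hcp'⟩ : ∃ cp', 3*p = cp + cp' := ⟨3*p - cp, by omega⟩
    obtain ⟨dp', hdp'⟩ : ∃ dp', 3*p = dp + dp' := ⟨3*p - dp, by omega⟩
    set M : ℕ := 2^(3*p) * 3^d' * 5^n' with hM
    set N : ℕ := 2^cp' * 3^dp' * 5^(2*p) with hN
    have f22 : (Nat.factorization 2) 2 = 1 := Nat.Prime.factorization_self (by norm_num)
    have f32 : (Nat.factorization 3) 2 = 0 := Nat.factorization_eq_zero_of_not_dvd (by norm_num)
    have f52 : (Nat.factorization 5) 2 = 0 := Nat.factorization_eq_zero_of_not_dvd (by norm_num)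
    have hMN : M ≠ N := by
      intro h
      have hm : M.factorization 2 = 3*p := by
        rw [hM, Nat.factorization_mul (by positivity) (by positivity),
            Nat.factorization_mul (by positivity) (by positivity)]
        simp [Nat.factorization_pow, f22, f32, f52]
      have hn : N.factorization 2 = cp' := by
        rw [hN, Nat.factorization_mul (by positivity) (by positivity),
            Nat.factorization_mul (by positivity) (by positivity)]
        simp [Nat.factorization_pow, f22, f32, f52]
      rw [h, hn] at hm
      omega
    have h30 : (30:ℚ)^(3*p) = 2^(3*p) * 3^(3*p) * 5^(3*p) := by
      rw [show (30:ℚ) = 2*3*5 by norm_num, mul_pow, mul_pow]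
    have h30pos : (0:ℚ) < 30^(3*p) := by positivity
    have hA_eq : (1:ℚ)/((3:ℚ)^d*5^n) = (M:ℚ)/30^(3*p) := by
      rw [div_eq_div_iff (ne_of_gt hAden) (ne_of_gt h30pos), hM]
      push_cast
      rw [h30, show (3:ℚ)^(3*p) = 3^d * 3^d' by rw [← pow_add, ← hd'],
          show (5:ℚ)^(3*p) = 5^n * 5^n' by rw [← pow_add, ← hn']]
      ring
    have hB_eq : (1:ℚ)/((2:ℚ)^cp*3^dp*5^p) = (N:ℚ)/30^(3*p) := by
      rw [div_eq_div_iff (ne_of_gt hBden) (ne_of_gt h30pos), hN]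
      push_cast
      rw [h30, show (2:ℚ)^(3*p) = 2^cp * 2^cp' by rw [← pow_add, ← hcp'],
          show (3:ℚ)^(3*p) = 3^dp * 3^dp' by rw [← pow_add, ← hdp'],
          show (5:ℚ)^(3*p) = 5^p * 5^(2*p) by rw [← pow_add]; congr 1; omega]
      ring
    rw [hA_eq, hB_eq, div_sub_div_same, abs_div, abs_of_pos h30pos, ge_iff_le,
        div_le_div_iff₀ (by positivity) h30pos, one_mul]
    have h1 : (1:ℚ) ≤ |(M:ℚ) - N| := by
      have : (1:ℤ) ≤ |(M:ℤ) - N| := Int.one_le_abs (sub_ne_zero.mpr (by exact_mod_cast hMN))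
      exact_mod_cast this
    calc (30:ℚ)^(3*p) = 1 * 30^(3*p) := (one_mul _).symm
      _ ≤ |(M:ℚ) - N| * 30^(3*p) := by gcongr
end

section
/- Let k ∈ {1,2}, let μ > 0 be real, let P ≥ 2, let (k_q)_{q=1}^{P-1} be a sequence with each k_q ∈ {4-k, 5}, and let (a_p)_{p=1}^{P} be real numbers with a_P = 1 and |a_{q+1} - k_q * a_q| < μ for all 1 ≤ q ≤ P-1. Then |∏_{q=1}^{P-1} (1/k_{P-q}) - a_1| < μ. -/
theorem stmt_13 (k : ℕ) (hk : k = 1 ∨ k = 2) (μ : ℝ) (hμ : 0 < μ)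
    (P : ℕ) (hP : 2 ≤ P) (kq : ℕ → ℕ)
    (hkq : ∀ q, 1 ≤ q → q ≤ P - 1 → kq q = 4 - k ∨ kq q = 5)
    (a : ℕ → ℝ) (haP : a P = 1)
    (herr : ∀ q, 1 ≤ q → q ≤ P - 1 → |a (q + 1) - (kq q : ℝ) * a q| < μ) :
    |(∏ q ∈ Finset.Icc 1 (P - 1), 1 / ((kq (P - q) : ℝ))) - a 1| < μ := by
  have hK : ∀ q, 1 ≤ q → q ≤ P - 1 → 2 ≤ (kq q : ℝ) := by
    intro q h1 h2
    rcases hkq q h1 h2 with h | h <;> rcases hk with hk | hk <;>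
      simp [h, hk] <;> norm_num
  have key : ∀ p, 1 ≤ p → p ≤ P - 1 →
      |(∏ q ∈ Finset.Icc 1 p, 1 / ((kq (P - q) : ℝ))) - a (P - p)| <
        μ * (1 - (1/2 : ℝ) ^ p) := by
    intro p hp1
    induction p, hp1 using Nat.le_induction with
    | base =>
      intro hpP
      have h1 : 1 ≤ P - 1 := by omega
      have hKq := hK (P - 1) h1 le_rfl
      have herr1 := herr (P - 1) h1 le_rfl
      have hPq : P - 1 + 1 = P := by omega
      rw [hPq, haP] at herr1
      have hKpos : (0:ℝ) < (kq (P - 1) : ℝ) := by linarith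
      have heq : (∏ q ∈ Finset.Icc 1 1, 1 / ((kq (P - q) : ℝ))) - a (P - 1)
          = (1 / (kq (P - 1) : ℝ)) * (1 - (kq (P - 1) : ℝ) * a (P - 1)) := by
        simp
        field_simp
      rw [heq, abs_mul, abs_of_pos (by positivity : (0:ℝ) < 1 / (kq (P - 1) : ℝ))]
      have h2 : 1 / (kq (P - 1) : ℝ) ≤ 1 / 2 := by
        apply one_div_le_one_div_of_le <;> linarith
      calc 1 / (kq (P - 1) : ℝ) * |1 - (kq (P - 1) : ℝ) * a (P - 1)|
          < 1 / (kq (P - 1) : ℝ) * μ := by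
            apply mul_lt_mul_of_pos_left herr1 (by positivity)
        _ ≤ (1/2) * μ := by nlinarith
        _ = μ * (1 - (1/2 : ℝ) ^ 1) := by ring
    | succ p hp ih =>
      intro hpP
      have hpP' : p ≤ P - 1 := by omega
      have ih' := ih hpP'
      set q := P - (p + 1) with hq
      have hq1 : 1 ≤ q := by omega
      have hq2 : q ≤ P - 1 := by omega
      have hqs : q + 1 = P - p := by omega
      have hKq := hK q hq1 hq2
      have herr1 := herr q hq1 hq2
      rw [hqs] at herr1
      have hKpos : (0:ℝ) < (kq q : ℝ) := by linarith
      have hprod : (∏ x ∈ Finset.Icc 1 (p + 1), 1 / ((kq (P - x) : ℝ)))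
          = (∏ x ∈ Finset.Icc 1 p, 1 / ((kq (P - x) : ℝ))) * (1 / (kq q : ℝ)) := by
        rw [Finset.prod_Icc_succ_top (by omega : 1 ≤ p + 1)]
      set b := ∏ x ∈ Finset.Icc 1 p, 1 / ((kq (P - x) : ℝ)) with hb
      have heq : b * (1 / (kq q : ℝ)) - a q
          = (1 / (kq q : ℝ)) * ((b - a (P - p)) + (a (P - p) - (kq q : ℝ) * a q)) := by
        field_simp
        ring
      rw [hprod, heq, abs_mul, abs_of_pos (by positivity : (0:ℝ) < 1 / (kq q : ℝ))]
      have h2 : 1 / (kq q : ℝ) ≤ 1 / 2 := by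
        apply one_div_le_one_div_of_le <;> linarith
      have htri : |(b - a (P - p)) + (a (P - p) - (kq q : ℝ) * a q)|
          ≤ |b - a (P - p)| + |a (P - p) - (kq q : ℝ) * a q| := abs_add_le _ _
      have hsum : |(b - a (P - p)) + (a (P - p) - (kq q : ℝ) * a q)|
          < μ * (1 - (1/2 : ℝ) ^ p) + μ := by
        calc _ ≤ _ := htri
          _ < _ := by exact add_lt_add ih' herr1
      calc 1 / (kq q : ℝ) * |(b - a (P - p)) + (a (P - p) - (kq q : ℝ) * a q)|
          ≤ (1/2) * |(b - a (P - p)) + (a (P - p) - (kq q : ℝ) * a q)| := by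
            apply mul_le_mul_of_nonneg_right h2 (abs_nonneg _)
        _ < (1/2) * (μ * (1 - (1/2 : ℝ) ^ p) + μ) := by
            apply mul_lt_mul_of_pos_left hsum (by norm_num)
        _ = μ * (1 - (1/2 : ℝ) ^ (p + 1)) := by ring
  have h1 : 1 ≤ P - 1 := by omega
  have hfin := key (P - 1) h1 le_rfl
  have hPP : P - (P - 1) = 1 := by omega
  rw [hPP] at hfin
  have hpow : (0:ℝ) < (1/2 : ℝ) ^ (P - 1) := by positivity
  nlinarith
end

section
/- Let c, d, n, c', d', n' be natural numbers with c + d ≤ n and c' + d' ≤ n' and (c,d,n) ≠ (c',d',n'). If moreover a rational a satisfies |a - (1 - 1/(2^c 3^d 5^n))| ≤ 1/(12*30^(5*N)) for some N ≥ max(n, n'), then |a - (1 - 1/(2^{c'} 3^{d'} 5^{n'}))| > 1/(12*30^(5*N)). -/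
lemma enc_inj_aux (c d n c' d' n' : ℕ) (h : 2^c*3^d*5^n = 2^c'*3^d'*5^n') :
    c = c' ∧ d = d' ∧ n = n' := by
  have h2 := congrArg (fun m => m.factorization 2) h
  have h3 := congrArg (fun m => m.factorization 3) h
  have h5 := congrArg (fun m => m.factorization 5) h
  simp [Nat.factorization_mul, Nat.factorization_pow, Nat.Prime.factorization,
    Nat.prime_two, Nat.prime_three, (by norm_num : Nat.Prime 5)] at h2 h3 h5
  exact ⟨h2, h3, h5⟩

lemma enc_bound (x y z N : ℕ) (hxy : x + y ≤ z) (hzN : z ≤ N) :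
    2^x*3^y*5^z ≤ 30^N := by
  have s1 : (2:ℕ)^x*3^y*5^z ≤ 2^z*3^z*5^z := by
    gcongr <;> omega
  have s2 : (2:ℕ)^z*3^z*5^z = 30^z := by
    rw [← Nat.mul_pow, ← Nat.mul_pow]
  have s3 : (30:ℕ)^z ≤ 30^N := Nat.pow_le_pow_right (by norm_num) hzN
  omega

theorem stmt_15 (c d n c' d' n' N : ℕ)
    (h1 : c + d ≤ n) (h2 : c' + d' ≤ n') (hne : (c, d, n) ≠ (c', d', n'))
    (hN : n ≤ N) (hN' : n' ≤ N) (a : ℚ)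
    (ha : |a - (1 - 1 / ((2 : ℚ) ^ c * 3 ^ d * 5 ^ n))| ≤ 1 / (12 * 30 ^ (5 * N))) :
    |a - (1 - 1 / ((2 : ℚ) ^ c' * 3 ^ d' * 5 ^ n'))| > 1 / (12 * 30 ^ (5 * N)) := by
  set D : ℕ := 2^c*3^d*5^n with hD
  set D' : ℕ := 2^c'*3^d'*5^n' with hD'
  have hDpos : 0 < D := by positivity
  have hD'pos : 0 < D' := by positivity
  have hDne : D ≠ D' := by
    intro h
    obtain ⟨e1, e2, e3⟩ := enc_inj_aux c d n c' d' n' h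
    exact hne (by simp [e1, e2, e3])
  have hDle : D ≤ 30^N := enc_bound c d n N h1 hN
  have hD'le : D' ≤ 30^N := enc_bound c' d' n' N h2 hN'
  have hQ : 0 < (D:ℚ) := by exact_mod_cast hDpos
  have hQ' : 0 < (D':ℚ) := by exact_mod_cast hD'pos
  have hcast : ((2 : ℚ) ^ c * 3 ^ d * 5 ^ n) = (D : ℚ) := by push_cast [hD]; ring
  have hcast' : ((2 : ℚ) ^ c' * 3 ^ d' * 5 ^ n') = (D' : ℚ) := by push_cast [hD']; ring
  have hgap : |1/(D:ℚ) - 1/(D':ℚ)| ≥ 1/(30:ℚ)^(2*N) := by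
    have key : 1/(D:ℚ) - 1/(D':ℚ) = ((D':ℚ) - D)/((D:ℚ)*D') := by
      field_simp
    rw [key, abs_div, abs_of_pos (mul_pos hQ hQ')]
    have hden : (D:ℚ)*(D':ℚ) ≤ (30:ℚ)^(2*N) := by
      have a1 : (D:ℚ) ≤ (30:ℚ)^N := by exact_mod_cast hDle
      have a2 : (D':ℚ) ≤ (30:ℚ)^N := by exact_mod_cast hD'le
      calc (D:ℚ)*(D':ℚ) ≤ (30:ℚ)^N * (30:ℚ)^N :=
            mul_le_mul a1 a2 (le_of_lt hQ') (by positivity)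
        _ = (30:ℚ)^(2*N) := by rw [← pow_add, two_mul]
    have hnum1 : (1:ℚ) ≤ |(D':ℚ) - (D:ℚ)| := by
      have hz : ((D':ℤ) - D) ≠ 0 := by
        intro h; apply hDne; omega
      have h1 := Int.one_le_abs hz
      have e : ((D':ℚ) - D) = (((D':ℤ) - D : ℤ) : ℚ) := by push_cast; ring
      rw [e, ← Int.cast_abs]
      exact_mod_cast h1
    calc (1:ℚ)/(30:ℚ)^(2*N) ≤ 1/((D:ℚ)*D') :=
          one_div_le_one_div_of_le (mul_pos hQ hQ') hden
      _ ≤ |(D':ℚ) - D| / ((D:ℚ)*D') := by gcongr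
  rw [hcast] at ha
  rw [hcast']
  have hnum : (1:ℚ)/(30:ℚ)^(2*N) - 1/(12*30^(5*N)) > 1/(12*30^(5*N)) := by
    have hx : (0:ℚ) < (30:ℚ)^(5*N) := by positivity
    have hy : (0:ℚ) < (30:ℚ)^(2*N) := by positivity
    have hyx : (30:ℚ)^(2*N) ≤ (30:ℚ)^(5*N) := pow_le_pow_right₀ (by norm_num) (by omega)
    rw [gt_iff_lt, lt_sub_iff_add_lt]
    have e : (1:ℚ)/(12*30^(5*N)) + 1/(12*30^(5*N)) = 1/(6*(30:ℚ)^(5*N)) := by ring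
    rw [e]
    exact one_div_lt_one_div_of_lt hy (by linarith)
  have tri : |1/(D:ℚ) - 1/(D':ℚ)| ≤ |a - (1 - 1/(D:ℚ))| + |a - (1 - 1/(D':ℚ))| := by
    have e : (1:ℚ)/(D:ℚ) - 1/(D':ℚ) = ((1 - 1/(D':ℚ)) - (1 - 1/(D:ℚ))) := by ring
    rw [e]
    calc |(1 - 1/(D':ℚ)) - (1 - 1/(D:ℚ))| ≤ |(1 - 1/(D':ℚ)) - a| + |a - (1 - 1/(D:ℚ))| :=
          abs_sub_le _ _ _
      _ = |a - (1 - 1/(D':ℚ))| + |a - (1 - 1/(D:ℚ))| := by rw [abs_sub_comm]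
      _ = |a - (1 - 1/(D:ℚ))| + |a - (1 - 1/(D':ℚ))| := by ring
  linarith [hgap, hnum, ha, tri]
end
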